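/- Let k be a positive integer, α ≥ 1 a rational number with odd denominator, γ ∈ (0,1] a ratio of odd positive integers, a, p, q : ℕ → ℝ, r : ℕ → ℝ∖{0}, f : ℝ → ℝ, and n_3 ≥ k. Suppose x : ℕ → ℝ is a sequence such that for every n ≥ n_3 the series Σ_{i=j}^∞ (a_i f(x_{i+1}) + q_i x_i^α) and Σ_{j=n}^∞ ((1/r_j) Σ_{i=j}^∞ (a_i f(x_{i+1}) + q_i x_i^α))^{1/γ} converge, and x_n = −p_n x_{n−k} − Σ_{j=n}^∞ ((1/r_j) Σ_{i=j}^∞ (a_i f(x_{i+1}) + q_i x_i^α))^{1/γ} for all n ≥ n_3. Then x satisfies Δ(r_n (Δ(x_n + p_n x_{n−k}))^γ) + q_n x_n^α + a_n f(x_{n+1}) = 0 for every n ≥ n_3. -/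

import Mathlib

open Filter Topology

/-- Forward difference of a real sequence: `Δu_n = u_{n+1} - u_n`. -/
def fdiff (u : ℕ → ℝ) (n : ℕ) : ℝ := u (n + 1) - u n

/-- Sign-preserving power `x ^ ρ` for a rational exponent `ρ = s/t` (in lowest terms) with
odd denominator `t`: it is the unique real `y` with `y ^ t = x ^ s`.  For `x ≥ 0` it agrees
with the usual real power; for such exponents `(x^{1/γ})^γ = x` for all real `x`. -/
noncomputable def opow (x : ℝ) (ρ : ℚ) : ℝ :=
  if Even ρ.num ∨ 0 ≤ x then |x| ^ (ρ : ℝ) else -(|x| ^ (ρ : ℝ))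

lemma opow_of_nonneg {x : ℝ} (hx : 0 ≤ x) (ρ : ℚ) : opow x ρ = x ^ (ρ : ℝ) := by
  rw [opow, if_pos (Or.inr hx), abs_of_nonneg hx]

lemma opow_of_neg {x : ℝ} (hx : x < 0) {ρ : ℚ} (hρ : Odd ρ.num) :
    opow x ρ = -(|x| ^ (ρ : ℝ)) := by
  rw [opow, if_neg]
  push_neg
  exact ⟨Int.not_even_iff_odd.mpr hρ, hx⟩

lemma inv_num_eq_den (γ : ℚ) (hγ0 : 0 < γ) : γ⁻¹.num = γ.den := by
  have q_num_pos : 0 < γ.num := Rat.num_pos.2 hγ0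
  have coprime : (γ.den : ℤ).natAbs.Coprime γ.num.natAbs := by
    simpa using γ.reduced.symm
  have h := Rat.num_div_eq_of_coprime q_num_pos coprime
  rw [Rat.inv_def, Rat.divInt_eq_div]
  exact_mod_cast h

lemma opow_inv_opow (γ : ℚ) (hγ0 : 0 < γ) (hγnum : Odd γ.num) (hγden : Odd γ.den)
    (x : ℝ) : opow (opow x γ⁻¹) γ = x := by
  have hγR : (γ : ℝ) ≠ 0 := by exact_mod_cast hγ0.ne'
  have hinum : Odd γ⁻¹.num := by
    rw [inv_num_eq_den γ hγ0]; exact_mod_cast hγden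
  have hcast : ((γ⁻¹ : ℚ) : ℝ) = (γ : ℝ)⁻¹ := by push_cast; ring
  rcases le_or_gt 0 x with hx | hx
  · rw [opow_of_nonneg hx, hcast]
    have h1 : (0:ℝ) ≤ x ^ ((γ : ℝ))⁻¹ := Real.rpow_nonneg hx _
    rw [opow_of_nonneg h1, Real.rpow_inv_rpow hx hγR]
  · have habs : (0:ℝ) < |x| := abs_pos.mpr hx.ne
    rw [opow_of_neg hx hinum, hcast]
    have h1 : -(|x| ^ ((γ:ℝ))⁻¹) < 0 := by
      have := Real.rpow_pos_of_pos habs ((γ:ℝ))⁻¹; linarith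
    rw [opow_of_neg h1 hγnum, abs_neg, abs_of_nonneg (Real.rpow_nonneg habs.le _),
      Real.rpow_inv_rpow habs.le hγR]
    rw [abs_of_neg hx]; ring

lemma tsum_shift (u : ℕ → ℝ) (n : ℕ) (hs : Summable fun i => u (n + i)) :
    ∑' i : ℕ, u (n + i) = u n + ∑' i : ℕ, u (n + 1 + i) := by
  rw [Summable.tsum_eq_zero_add hs]
  congr 1
  exact tsum_congr fun i => by congr 1; omega


/-- Equation (E): `Δ(r_n (Δ(x_n + p_n x_{n-k}))^γ) + q_n x_n^α + a_n f(x_{n+1}) = 0`. -/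
noncomputable def eqnE (k : ℕ) (r a p q : ℕ → ℝ) (f : ℝ → ℝ) (α γ : ℚ)
    (x : ℕ → ℝ) (n : ℕ) : Prop :=
  fdiff (fun m => r m * opow (fdiff (fun j => x j + p j * x (j - k)) m) γ) n
    + q n * opow (x n) α + a n * f (x (n + 1)) = 0

/-- Step 4: a sequence satisfying the fixed-point identity
`x_n = -p_n x_{n-k} - Σ_{j=n}^∞ ((1/r_j) Σ_{i=j}^∞ (a_i f(x_{i+1}) + q_i x_i^α))^{1/γ}`
for all `n ≥ n₃` satisfies equation (E) for all `n ≥ n₃`. -/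
theorem fixed_point_is_solution
    (k : ℕ) (hk : 0 < k) (α γ : ℚ)
    (hα : 1 ≤ α) (hαden : Odd α.den)
    (hγ0 : 0 < γ) (hγ1 : γ ≤ 1) (hγnum : Odd γ.num) (hγden : Odd γ.den)
    (f : ℝ → ℝ) (r a p q : ℕ → ℝ) (hr : ∀ n, r n ≠ 0)
    (n₃ : ℕ) (hn₃ : k ≤ n₃) (x : ℕ → ℝ)
    -- the inner series `Σ_{i=j}^∞ (a_i f(x_{i+1}) + q_i x_i^α)` converge
    (hinner : ∀ j, n₃ ≤ j → Summable fun i : ℕ =>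
      a (j + i) * f (x (j + i + 1)) + q (j + i) * opow (x (j + i)) α)
    -- the outer series `Σ_{j=n}^∞ ((1/r_j) Σ_{i=j}^∞ (…))^{1/γ}` converge
    (houter : ∀ n, n₃ ≤ n → Summable fun j : ℕ =>
      opow ((1 / r (n + j)) * ∑' i : ℕ,
        (a (n + j + i) * f (x (n + j + i + 1)) +
          q (n + j + i) * opow (x (n + j + i)) α)) γ⁻¹)
    -- the fixed-point identity
    (hfix : ∀ n, n₃ ≤ n →
      x n = -(p n * x (n - k)) -
        ∑' j : ℕ, opow ((1 / r (n + j)) * ∑' i : ℕ,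
          (a (n + j + i) * f (x (n + j + i + 1)) +
            q (n + j + i) * opow (x (n + j + i)) α)) γ⁻¹) :
    ∀ n, n₃ ≤ n → eqnE k r a p q f α γ x n := by
  classical
  set u : ℕ → ℝ := fun m => a m * f (x (m + 1)) + q m * opow (x m) α with hu
  set T : ℕ → ℝ := fun m => ∑' i : ℕ, u (m + i) with hT
  set G : ℕ → ℝ := fun m => opow ((1 / r m) * T m) γ⁻¹ with hG
  have hTsum : ∀ m, n₃ ≤ m → Summable fun i => u (m + i) := fun m hm => hinner m hm
  have hGsum : ∀ m, n₃ ≤ m → Summable fun j => G (m + j) := fun m hm => houter m hm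
  have hfix' : ∀ m, n₃ ≤ m → x m + p m * x (m - k) = -∑' j : ℕ, G (m + j) := by
    intro m hm
    have h1 : x m = -(p m * x (m - k)) - ∑' j : ℕ, G (m + j) := hfix m hm
    rw [h1]; ring
  have key : ∀ m, n₃ ≤ m →
      x (m + 1) + p (m + 1) * x (m + 1 - k) - (x m + p m * x (m - k)) = G m := by
    intro m hm
    have hshift := tsum_shift G m (hGsum m hm)
    have e1 := hfix' m hm
    have e2 := hfix' (m + 1) (hm.trans (Nat.le_succ m))
    rw [e1, e2, hshift]; ring
  have hrT : ∀ m, r m * opow (G m) γ = T m := by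
    intro m
    rw [hG]
    rw [opow_inv_opow γ hγ0 hγnum hγden, one_div, ← mul_assoc,
      mul_inv_cancel₀ (hr m), one_mul]
  intro n hn
  have hn1 : n₃ ≤ n + 1 := hn.trans (Nat.le_succ n)
  have hT2 : T n = u n + T (n + 1) := tsum_shift u n (hTsum n hn)
  have hun : u n = a n * f (x (n + 1)) + q n * opow (x n) α := rfl
  show (fun m => r m * opow (fdiff (fun j => x j + p j * x (j - k)) m) γ) (n + 1)
      - (fun m => r m * opow (fdiff (fun j => x j + p j * x (j - k)) m) γ) n
      + q n * opow (x n) α + a n * f (x (n + 1)) = 0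
  simp only [fdiff]
  rw [key n hn, key (n + 1) hn1, hrT, hrT, hT2, hun]
  ring
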